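/- Let P be a finite set of points in ℝ² with diameter D > 0 attained by points p₁, p₂ ∈ P, let u = (p₁ − p₂)/D, let z = w_{u⊥}(P)/D, and let c ≥ 0 be a real constant. If β is a unit vector whose angle with the orientation of u, namely arccos(|⟨β, u⟩|), is at most (2c + 2)·arcsin(z), then w_{β⊥}(P) ≤ (4c + 6) · inf over all unit vectors γ of w_{γ⊥}(P). -/

import Mathlib

open Real
open scoped RealInnerProductSpace

noncomputable section

/-- The point of `ℝ²` with coordinates `a`, `b`. -/
def pt (a b : ℝ) : EuclideanSpace ℝ (Fin 2) :=
  (WithLp.equiv 2 (Fin 2 → ℝ)).symm ![a, b]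

/-- `v` rotated counterclockwise by `π/2`. -/
def perp (v : EuclideanSpace ℝ (Fin 2)) : EuclideanSpace ℝ (Fin 2) :=
  pt (-(v 1)) (v 0)

/-- The extent of a point set `P` along a vector `v`: `max_{p,q ∈ P} ⟨p − q, v⟩`. -/
def wext (v : EuclideanSpace ℝ (Fin 2)) (P : Set (EuclideanSpace ℝ (Fin 2))) : ℝ :=
  sSup {x : ℝ | ∃ p ∈ P, ∃ q ∈ P, x = ⟪p - q, v⟫}

private lemma inner_coords (x y : EuclideanSpace ℝ (Fin 2)) :
    ⟪x, y⟫ = x 0 * y 0 + x 1 * y 1 := by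
  simp [PiLp.inner_apply, Fin.sum_univ_two, RCLike.inner_apply]; ring

private lemma perp_zero (v : EuclideanSpace ℝ (Fin 2)) : perp v 0 = -(v 1) := rfl
private lemma perp_one (v : EuclideanSpace ℝ (Fin 2)) : perp v 1 = v 0 := rfl

private lemma perp_norm (v : EuclideanSpace ℝ (Fin 2)) : ‖perp v‖ = ‖v‖ := by
  rw [EuclideanSpace.norm_eq, EuclideanSpace.norm_eq]
  congr 1
  rw [Fin.sum_univ_two, Fin.sum_univ_two, perp_zero, perp_one, norm_neg]
  ring

private lemma inner_perp_perp (x y : EuclideanSpace ℝ (Fin 2)) :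
    ⟪perp x, perp y⟫ = ⟪x, y⟫ := by
  rw [inner_coords, inner_coords, perp_zero, perp_one, perp_zero, perp_one]; ring

private lemma inner_perp_skew (x y : EuclideanSpace ℝ (Fin 2)) :
    ⟪x, perp y⟫ = -⟪perp x, y⟫ := by
  rw [inner_coords, inner_coords, perp_zero, perp_one, perp_zero, perp_one]; ring

/-- orthonormal decomposition identity -/
private lemma decomp (g w v : EuclideanSpace ℝ (Fin 2)) (hg : g 0 ^ 2 + g 1 ^ 2 = 1) :
    ⟪w, v⟫ = ⟪v, g⟫ * ⟪w, g⟫ + ⟪v, perp g⟫ * ⟪w, perp g⟫ := by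
  simp only [inner_coords, perp_zero, perp_one]
  linear_combination (-(w 0 * v 0 + w 1 * v 1)) * hg

private lemma sum_sq (g v : EuclideanSpace ℝ (Fin 2))
    (hg : g 0 ^ 2 + g 1 ^ 2 = 1) (hv : v 0 ^ 2 + v 1 ^ 2 = 1) :
    ⟪v, g⟫ ^ 2 + ⟪v, perp g⟫ ^ 2 = 1 := by
  rw [inner_coords, inner_coords, perp_zero, perp_one]
  nlinarith [hg, hv, sq_nonneg (v 0 * g 0 + v 1 * g 1), sq_nonneg (v 0 * g 1 - v 1 * g 0)]

private lemma coord_sq_of_norm_one (v : EuclideanSpace ℝ (Fin 2)) (hv : ‖v‖ = 1) :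
    v 0 ^ 2 + v 1 ^ 2 = 1 := by
  have h := real_inner_self_eq_norm_sq v
  rw [inner_coords, hv] at h
  nlinarith [h]

private lemma wext_set_finite (v : EuclideanSpace ℝ (Fin 2))
    {P : Set (EuclideanSpace ℝ (Fin 2))} (hfin : P.Finite) :
    {x : ℝ | ∃ p ∈ P, ∃ q ∈ P, x = ⟪p - q, v⟫}.Finite := by
  have : {x : ℝ | ∃ p ∈ P, ∃ q ∈ P, x = ⟪p - q, v⟫} =
      (fun pq : EuclideanSpace ℝ (Fin 2) × EuclideanSpace ℝ (Fin 2) =>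
        (⟪pq.1 - pq.2, v⟫ : ℝ)) '' (P ×ˢ P) := by
    ext x
    constructor
    · rintro ⟨p, hp, q, hq, rfl⟩; exact ⟨(p, q), ⟨hp, hq⟩, rfl⟩
    · rintro ⟨⟨p, q⟩, ⟨hp, hq⟩, rfl⟩; exact ⟨p, hp, q, hq, rfl⟩
  rw [this]
  exact (hfin.prod hfin).image _

private lemma inner_le_wext (v : EuclideanSpace ℝ (Fin 2))
    {P : Set (EuclideanSpace ℝ (Fin 2))} (hfin : P.Finite)
    {p q : EuclideanSpace ℝ (Fin 2)} (hp : p ∈ P) (hq : q ∈ P) :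
    ⟪p - q, v⟫ ≤ wext v P :=
  le_csSup (wext_set_finite v hfin).bddAbove ⟨p, hp, q, hq, rfl⟩

private lemma abs_inner_le_wext (v : EuclideanSpace ℝ (Fin 2))
    {P : Set (EuclideanSpace ℝ (Fin 2))} (hfin : P.Finite)
    {p q : EuclideanSpace ℝ (Fin 2)} (hp : p ∈ P) (hq : q ∈ P) :
    |⟪p - q, v⟫| ≤ wext v P := by
  rcases abs_cases (⟪p - q, v⟫ : ℝ) with ⟨h, _⟩ | ⟨h, _⟩
  · rw [h]; exact inner_le_wext v hfin hp hq
  · rw [h]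
    have : (-⟪p - q, v⟫ : ℝ) = ⟪q - p, v⟫ := by
      rw [← inner_neg_left]; congr 1; abel
    rw [this]; exact inner_le_wext v hfin hq hp

private lemma wext_le (v : EuclideanSpace ℝ (Fin 2))
    {P : Set (EuclideanSpace ℝ (Fin 2))} (hne : P.Nonempty) {M : ℝ}
    (h : ∀ p ∈ P, ∀ q ∈ P, ⟪p - q, v⟫ ≤ M) : wext v P ≤ M := by
  apply csSup_le
  · obtain ⟨p, hp⟩ := hne
    exact ⟨⟪p - p, v⟫, p, hp, p, hp, rfl⟩
  · rintro x ⟨p, hp, q, hq, rfl⟩; exact h p hp q hq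

private lemma wext_attained (v : EuclideanSpace ℝ (Fin 2))
    {P : Set (EuclideanSpace ℝ (Fin 2))} (hfin : P.Finite) (hne : P.Nonempty) :
    ∃ p ∈ P, ∃ q ∈ P, wext v P = ⟪p - q, v⟫ := by
  have hmem : sSup {x : ℝ | ∃ p ∈ P, ∃ q ∈ P, x = ⟪p - q, v⟫} ∈
      {x : ℝ | ∃ p ∈ P, ∃ q ∈ P, x = ⟪p - q, v⟫} := by
    apply Set.Nonempty.csSup_mem
    · obtain ⟨p, hp⟩ := hne
      exact ⟨⟪p - p, v⟫, p, hp, p, hp, rfl⟩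
    · exact wext_set_finite v hfin
  exact hmem

private lemma wext_nonneg (v : EuclideanSpace ℝ (Fin 2))
    {P : Set (EuclideanSpace ℝ (Fin 2))} (hfin : P.Finite) (hne : P.Nonempty) :
    0 ≤ wext v P := by
  obtain ⟨p, hp⟩ := hne
  have := inner_le_wext v hfin hp hp
  simpa using this

set_option maxHeartbeats 1000000 in
/-- Lemma 15 of the paper: if the orientation `β` is within angle `(2c+2)·arcsin z`
of the diametrical orientation `u` (where `z` is the aspect ratio of the diametric
box), then the covering strip with orientation `β` has width at most `(4c+6)` times
the minimum strip width. -/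
theorem stmt_19 (P : Set (EuclideanSpace ℝ (Fin 2))) (hfin : P.Finite)
    (D : ℝ) (hD : 0 < D)
    (p₁ p₂ : EuclideanSpace ℝ (Fin 2)) (hp₁ : p₁ ∈ P) (hp₂ : p₂ ∈ P)
    (hdiam : ∀ p ∈ P, ∀ q ∈ P, dist p q ≤ D) (hattain : dist p₁ p₂ = D)
    (u : EuclideanSpace ℝ (Fin 2)) (hu : u = D⁻¹ • (p₁ - p₂))
    (z : ℝ) (hz : z = wext (perp u) P / D)
    (c : ℝ) (hc : 0 ≤ c)
    (β : EuclideanSpace ℝ (Fin 2)) (hβ : ‖β‖ = 1)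
    (hangle : Real.arccos |⟪β, u⟫| ≤ (2 * c + 2) * Real.arcsin z) :
    wext (perp β) P ≤
      (4 * c + 6) * sInf {x : ℝ | ∃ γ : EuclideanSpace ℝ (Fin 2),
        ‖γ‖ = 1 ∧ x = wext (perp γ) P} := by
  have hne : P.Nonempty := ⟨p₁, hp₁⟩
  have hnd : ‖p₁ - p₂‖ = D := by rw [← hattain, dist_eq_norm]
  have hun : ‖u‖ = 1 := by
    rw [hu, norm_smul, hnd, Real.norm_eq_abs, abs_of_pos (inv_pos.2 hD),
      inv_mul_cancel₀ hD.ne']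
  -- generic bound |⟪p - q, v⟫| ≤ D for unit v
  have hDb : ∀ v : EuclideanSpace ℝ (Fin 2), ‖v‖ = 1 →
      ∀ p ∈ P, ∀ q ∈ P, |⟪p - q, v⟫| ≤ D := by
    intro v hv p hp q hq
    calc |⟪p - q, v⟫| ≤ ‖p - q‖ * ‖v‖ := abs_real_inner_le_norm _ _
      _ = dist p q := by rw [hv, mul_one, dist_eq_norm]
      _ ≤ D := hdiam p hp q hq
  set W : ℝ := wext (perp u) P with hW
  clear_value W
  have hW0 : 0 ≤ W := hW ▸ wext_nonneg _ hfin hne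
  have hWzD : W = z * D := by rw [hz, div_mul_cancel₀ _ hD.ne']
  have hz0 : 0 ≤ z := by
    rw [hz]; exact div_nonneg hW0 hD.le
  have hWD : W ≤ D := by
    rw [hW]
    apply wext_le _ hne
    intro p hp q hq
    have := hDb (perp u) (by rw [perp_norm, hun]) p hp q hq
    exact (le_abs_self _).trans this
  have hz1 : z ≤ 1 := by
    rw [hz]; exact div_le_one_of_le₀ hWD hD.le
  have hu2 : u 0 ^ 2 + u 1 ^ 2 = 1 := coord_sq_of_norm_one u hun
  have hβ2 : β 0 ^ 2 + β 1 ^ 2 = 1 := coord_sq_of_norm_one β hβ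
  -- the angle θ
  set θ : ℝ := Real.arccos |⟪β, u⟫| with hθ
  clear_value θ
  have habs1 : |⟪β, u⟫| ≤ 1 := by
    have := abs_real_inner_le_norm β u
    rwa [hβ, hun, one_mul] at this
  -- sin θ bound
  have hsinθ : Real.sin θ ≤ (2 * c + 2) * z := by
    set s : ℝ := Real.arcsin z with hs
    set k : ℝ := 2 * c + 2 with hk
    clear_value s k
    have hs0 : 0 ≤ s := hs ▸ Real.arcsin_nonneg.2 hz0
    have hsπ : s ≤ π / 2 := hs ▸ Real.arcsin_le_pi_div_two z
    have hsz : Real.sin s = z := by rw [hs]; exact Real.sin_arcsin (by linarith only [hz0]) hz1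
    have hθ0 : 0 ≤ θ := hθ ▸ Real.arccos_nonneg _
    have hθπ : θ ≤ π / 2 := hθ ▸ Real.arccos_le_pi_div_two.2 (abs_nonneg _)
    have hk1 : (1 : ℝ) ≤ k := by rw [hk]; linarith only [hc]
    have hk0 : (0 : ℝ) < k := by linarith only [hk1]
    have hks0 : 0 ≤ k * s := mul_nonneg hk0.le hs0
    by_cases hcase : k * s ≤ π / 2
    · have hπ := Real.pi_pos
      have hm1 : θ ∈ Set.Icc (-(π/2)) (π/2) := by
        constructor
        · linarith only [hπ, hθ0]
        · exact hθπ
      have hm2 : k * s ∈ Set.Icc (-(π/2)) (π/2) := by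
        constructor
        · linarith only [hπ, hks0]
        · exact hcase
      have h1 : Real.sin θ ≤ Real.sin (k * s) :=
        Real.strictMonoOn_sin.monotoneOn hm1 hm2 hangle
      have h2 : Real.sin (k * s) ≤ k * z := by
        have hconc := strictConcaveOn_sin_Icc.concaveOn
        have hmem1 : k * s ∈ Set.Icc (0 : ℝ) π := by
          constructor
          · exact mul_nonneg hk0.le hs0
          · linarith only [hπ, hcase]
        have hmem0 : (0 : ℝ) ∈ Set.Icc (0 : ℝ) π := by
          constructor
          · exact le_rfl
          · linarith only [hπ]
        have ht0 : (0 : ℝ) ≤ 1 / k := by positivity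
        have ht1 : (0 : ℝ) ≤ 1 - 1 / k := by
          have h7 : 1 / k ≤ 1 := by
            rw [div_le_one hk0]; exact hk1
          linarith only [h7]
        have hsum : 1 / k + (1 - 1 / k) = 1 := by ring
        have := hconc.2 hmem1 hmem0 ht0 ht1 hsum
        simp only [smul_eq_mul, mul_zero, add_zero, Real.sin_zero] at this
        have heq : 1 / k * (k * s) = s := by field_simp
        rw [heq, hsz] at this
        -- this : 1 / k * sin (k * s) + (1 - 1/k) * 0 ≤ z
        have h3 : 1 / k * Real.sin (k * s) ≤ z := by linarith only [this]
        have h5 := mul_le_mul_of_nonneg_left h3 hk0.le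
        have h6 : k * (1 / k * Real.sin (k * s)) = Real.sin (k * s) := by
          field_simp
        linarith only [h5, h6]
      linarith only [h1, h2]
    · push_neg at hcase
      have hπ := Real.pi_pos
      have hzline : 2 / π * s ≤ z := by rw [← hsz]; exact Real.mul_le_sin hs0 hsπ
      have h1 : Real.sin θ ≤ 1 := Real.sin_le_one θ
      have h2 : (1 : ℝ) ≤ k * z := by
        have : 2 / π * (k * s) ≤ k * z := by
          have := mul_le_mul_of_nonneg_left hzline hk0.le
          calc 2 / π * (k * s) = k * (2 / π * s) := by ring
            _ ≤ k * z := this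
        have h4 : (1 : ℝ) < 2 / π * (k * s) := by
          rw [div_mul_eq_mul_div, lt_div_iff₀ hπ]
          linarith only [hcase]
        linarith only [this, h4]
      linarith only [h1, h2]
  -- upper bound on wext (perp β) P
  have hpβn : ‖perp β‖ = 1 := by rw [perp_norm, hβ]
  have hpβ2 : (perp β) 0 ^ 2 + (perp β) 1 ^ 2 = 1 := coord_sq_of_norm_one _ hpβn
  set a : ℝ := ⟪perp β, perp u⟫ with ha
  set b : ℝ := ⟪perp β, u⟫ with hb
  clear_value a b
  have hab : a ^ 2 + b ^ 2 = 1 := by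
    have h8 := sum_sq u (perp β) hu2 hpβ2
    rw [← ha, ← hb] at h8
    linarith only [h8]
  have haβu : a = ⟪β, u⟫ := ha ▸ inner_perp_perp β u
  have habs : |b| = Real.sin θ := by
    rw [hθ, Real.sin_arccos]
    rw [← Real.sqrt_sq_eq_abs]
    congr 1
    rw [sq_abs, ← haβu]
    linarith only [hab]
  have ha1 : |a| ≤ 1 := by
    rw [← Real.sqrt_one, ← Real.sqrt_sq_eq_abs]
    apply Real.sqrt_le_sqrt
    linarith only [hab, sq_nonneg b]
  have hupper : wext (perp β) P ≤ z * D + Real.sin θ * D := by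
    apply wext_le _ hne
    intro p hp q hq
    have hdec := decomp u (p - q) (perp β) hu2
    rw [← ha, ← hb] at hdec
    have h1 : b * ⟪p - q, u⟫ ≤ |b| * D := by
      calc b * ⟪p - q, u⟫ ≤ |b * ⟪p - q, u⟫| := le_abs_self _
        _ = |b| * |⟪p - q, u⟫| := abs_mul _ _
        _ ≤ |b| * D := by
            apply mul_le_mul_of_nonneg_left (hDb u hun p hp q hq) (abs_nonneg _)
    have h2 : a * ⟪p - q, perp u⟫ ≤ W := by
      calc a * ⟪p - q, perp u⟫ ≤ |a * ⟪p - q, perp u⟫| := le_abs_self _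
        _ = |a| * |⟪p - q, perp u⟫| := abs_mul _ _
        _ ≤ 1 * W := by
            rw [hW]
            exact mul_le_mul ha1 (abs_inner_le_wext _ hfin hp hq) (abs_nonneg _) zero_le_one
        _ = W := one_mul W
    have h4 : |b| * D = Real.sin θ * D := by rw [habs]
    rw [hdec]
    linarith only [h1, h2, h4, hWzD]
  -- lower bound: every unit direction has width ≥ z * D / 2
  have hlow : ∀ γ : EuclideanSpace ℝ (Fin 2), ‖γ‖ = 1 →
      z * D / 2 ≤ wext (perp γ) P := by
    intro γ hγ
    set Wγ : ℝ := wext (perp γ) P with hWγ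
    clear_value Wγ
    have hWγ0 : 0 ≤ Wγ := hWγ ▸ wext_nonneg _ hfin hne
    have hγ2 : γ 0 ^ 2 + γ 1 ^ 2 = 1 := coord_sq_of_norm_one γ hγ
    have hpun : ‖perp u‖ = 1 := by rw [perp_norm, hun]
    have hpu2 : (perp u) 0 ^ 2 + (perp u) 1 ^ 2 = 1 := coord_sq_of_norm_one _ hpun
    set a' : ℝ := ⟪perp u, perp γ⟫ with ha'
    set b' : ℝ := ⟪perp u, γ⟫ with hb'
    clear_value a' b'
    have hab' : a' ^ 2 + b' ^ 2 = 1 := by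
      have h8 := sum_sq γ (perp u) hγ2 hpu2
      rw [← ha', ← hb'] at h8
      linarith only [h8]
    have ha'1 : |a'| ≤ 1 := by
      rw [← Real.sqrt_one, ← Real.sqrt_sq_eq_abs]
      apply Real.sqrt_le_sqrt
      linarith only [hab', sq_nonneg b']
    obtain ⟨p, hp, q, hq, hpq⟩ := wext_attained (perp u) hfin hne
    have hdec := decomp γ (p - q) (perp u) hγ2
    rw [← ha', ← hb'] at hdec
    -- W = b' * ⟪p-q, γ⟫ + a' * ⟪p-q, perp γ⟫
    have hWeq : W = b' * ⟪p - q, γ⟫ + a' * ⟪p - q, perp γ⟫ := by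
      rw [hW, hpq, hdec]
    have h1 : b' * ⟪p - q, γ⟫ ≤ |b'| * D := by
      calc b' * ⟪p - q, γ⟫ ≤ |b' * ⟪p - q, γ⟫| := le_abs_self _
        _ = |b'| * |⟪p - q, γ⟫| := abs_mul _ _
        _ ≤ |b'| * D := mul_le_mul_of_nonneg_left (hDb γ hγ p hp q hq) (abs_nonneg _)
    have h2 : a' * ⟪p - q, perp γ⟫ ≤ Wγ := by
      calc a' * ⟪p - q, perp γ⟫ ≤ |a' * ⟪p - q, perp γ⟫| := le_abs_self _
        _ = |a'| * |⟪p - q, perp γ⟫| := abs_mul _ _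
        _ ≤ 1 * Wγ := by
            rw [hWγ]
            exact mul_le_mul ha'1 (abs_inner_le_wext _ hfin hp hq) (abs_nonneg _) zero_le_one
        _ = Wγ := one_mul _
    -- Wγ ≥ D * |b'|
    have h3 : D * |b'| ≤ Wγ := by
      have hp₁p₂ : p₁ - p₂ = D • u := by
        rw [hu, smul_smul, mul_inv_cancel₀ hD.ne', one_smul]
      have hin : (⟪p₁ - p₂, perp γ⟫ : ℝ) = D * (-b') := by
        rw [hp₁p₂, real_inner_smul_left]
        congr 1
        rw [hb', inner_perp_skew u γ]
      have h5 := abs_inner_le_wext (perp γ) hfin hp₁ hp₂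
      rw [hin, abs_mul, abs_of_pos hD, abs_neg, ← hWγ] at h5
      exact h5
    have hcomm : |b'| * D = D * |b'| := mul_comm _ _
    linarith only [hWeq, h1, h2, h3, hWzD, hcomm]
  -- conclude
  have hΓne : Set.Nonempty {x : ℝ | ∃ γ : EuclideanSpace ℝ (Fin 2),
      ‖γ‖ = 1 ∧ x = wext (perp γ) P} := ⟨wext (perp u) P, u, hun, rfl⟩
  have hinf : z * D / 2 ≤ sInf {x : ℝ | ∃ γ : EuclideanSpace ℝ (Fin 2),
      ‖γ‖ = 1 ∧ x = wext (perp γ) P} := by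
    apply le_csInf hΓne
    rintro x ⟨γ, hγ, rfl⟩
    exact hlow γ hγ
  have hfinal : wext (perp β) P ≤ (4 * c + 6) * (z * D / 2) := by
    have h1 : Real.sin θ * D ≤ (2 * c + 2) * z * D :=
      mul_le_mul_of_nonneg_right hsinθ hD.le
    have heq : (4 * c + 6) * (z * D / 2) = z * D + (2 * c + 2) * z * D := by ring
    linarith only [hupper, h1, heq]
  calc wext (perp β) P ≤ (4 * c + 6) * (z * D / 2) := hfinal
    _ ≤ _ := mul_le_mul_of_nonneg_left hinf (by linarith only [hc])
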